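/- Let g : ℝᵈ → ℝ be L̃-smooth on a convex set Θ, and suppose a Frank-Wolfe-type step θ_{t+1} = θ_t + (X_t/L̃) ŝ_t is taken, where ŝ_t minimizes ⟨∇g(θ_t) + e_t, s⟩ over {s : θ_t + s ∈ Θ, ‖s‖ ≤ 1} and X_t = −⟨∇g(θ_t) + e_t, ŝ_t⟩ ≥ 0. Then g(θ_{t+1}) ≤ g(θ_t) + (X_t/L̃)‖e_t‖ − X_t²/(2L̃). -/

import Mathlib

open scoped RealInnerProductSpace

/-- Descent inequality for one inexact Frank–Wolfe step:
    g(θ_{t+1}) ≤ g(θ_t) + (X_t/L̃)‖e_t‖ − X_t²/(2L̃). -/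
theorem frank_wolfe_descent_step {n : ℕ}
    (g : EuclideanSpace ℝ (Fin n) → ℝ)
    (G : EuclideanSpace ℝ (Fin n) → EuclideanSpace ℝ (Fin n))
    (Θ : Set (EuclideanSpace ℝ (Fin n))) (Lt : ℝ) (hLt : 0 < Lt)
    (hconv : Convex ℝ Θ)
    (hgrad : ∀ θ, HasGradientAt g (G θ) θ)
    (hsmooth : ∀ x y, g y ≤ g x + ⟪G x, y - x⟫ + (Lt/2) * ‖y - x‖^2)
    (θt e shat : EuclideanSpace ℝ (Fin n))
    (hθt : θt ∈ Θ) (hfeas : θt + shat ∈ Θ) (hs1 : ‖shat‖ ≤ 1)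
    (hmin : ∀ s, θt + s ∈ Θ → ‖s‖ ≤ 1 → ⟪G θt + e, shat⟫ ≤ ⟪G θt + e, s⟫)
    (X : ℝ) (hX : X = -⟪G θt + e, shat⟫) (hXnn : 0 ≤ X)
    (θnext : EuclideanSpace ℝ (Fin n)) (hθnext : θnext = θt + (X / Lt) • shat) :
    g θnext ≤ g θt + (X / Lt) * ‖e‖ - X^2 / (2 * Lt) := by
  have hdiff : θnext - θt = (X / Lt) • shat := by rw [hθnext]; abel
  have h := hsmooth θt θnext
  rw [hdiff] at h
  have hinner : ⟪G θt, (X / Lt) • shat⟫ = (X / Lt) * ⟪G θt, shat⟫ :=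
    real_inner_smul_right _ _ _
  have hsplit : ⟪G θt + e, shat⟫ = ⟪G θt, shat⟫ + ⟪e, shat⟫ :=
    inner_add_left _ _ _
  have hcs : |⟪e, shat⟫| ≤ ‖e‖ := by
    calc |⟪e, shat⟫| ≤ ‖e‖ * ‖shat‖ := abs_real_inner_le_norm _ _
    _ ≤ ‖e‖ * 1 := by
        exact mul_le_mul_of_nonneg_left hs1 (norm_nonneg _)
    _ = ‖e‖ := mul_one _
  have hG : ⟪G θt, shat⟫ ≤ -X + ‖e‖ := by
    have h1 := (abs_le.mp hcs).1
    linarith [hsplit, hX]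
  have hnorm : ‖(X / Lt) • shat‖^2 = (X / Lt)^2 * ‖shat‖^2 := by
    rw [norm_smul]
    rw [Real.norm_eq_abs, mul_pow, sq_abs]
  have hXL : 0 ≤ X / Lt := div_nonneg hXnn hLt.le
  have hns : ‖shat‖^2 ≤ 1 := by nlinarith [norm_nonneg shat]
  have hkey : (Lt/2) * ‖(X / Lt) • shat‖^2 ≤ X^2 / (2 * Lt) := by
    rw [hnorm]
    have : (Lt/2) * ((X / Lt)^2 * ‖shat‖^2) ≤ (Lt/2) * ((X / Lt)^2 * 1) := by
      apply mul_le_mul_of_nonneg_left _ (by linarith)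
      exact mul_le_mul_of_nonneg_left hns (sq_nonneg _)
    calc (Lt/2) * ((X / Lt)^2 * ‖shat‖^2) ≤ (Lt/2) * ((X / Lt)^2 * 1) := this
    _ = X^2 / (2 * Lt) := by field_simp
  have hGin : (X / Lt) * ⟪G θt, shat⟫ ≤ (X / Lt) * (-X + ‖e‖) :=
    mul_le_mul_of_nonneg_left hG hXL
  have hfin : (X / Lt) * (-X + ‖e‖) = (X / Lt) * ‖e‖ - X^2 / Lt := by
    field_simp; ring
  have hXX : X^2 / Lt - X^2 / (2 * Lt) = X^2 / (2 * Lt) := by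
    field_simp; ring
  rw [hinner] at h
  linarith
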